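/- Let f = Σ_{i=1}^n f_i x_i^3 + Σ_{i<j} (f_{ij} x_i x_j^2 + g_{ij} x_i^2 x_j) + Σ_{i<j<k} f_{ijk} x_i x_j x_k be a homogeneous cubic polynomial with real coefficients and let r ≥ 3 be an integer. Then ((r−1)(r−2)/r^2) · f_min^{(r−3)} ≥ f_{Δ(n,r)} − (1/r) · max_{x ∈ Δ_n} [3 Σ_{i=1}^n f_i x_i^2 + Σ_{i<j} (f_{ij} + g_{ij}) x_i x_j] + (2/r^2) · min_{x ∈ Δ_n} Σ_{i=1}^n f_i x_i. -/

import Mathlib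

open Finset

noncomputable section

/-- Falling factorial `t^(d) = t (t-1) ⋯ (t-d+1)`. -/
def fall (t : ℝ) : ℕ → ℝ
  | 0 => 1
  | d + 1 => fall t d * (t - (d : ℝ))

/-- The regular grid `Δ(n,r) = {x ∈ Δ_n : r·x ∈ ℕ^n}`. -/
def regularGrid (n r : ℕ) : Set (Fin n → ℝ) :=
  {x ∈ stdSimplex ℝ (Fin n) | ∀ i, ∃ k : ℕ, (r : ℝ) * x i = (k : ℝ)}

/-- `f_{Δ(n,r)}`, the minimum of `f` over the regular grid. -/
def minGrid (n r : ℕ) (f : (Fin n → ℝ) → ℝ) : ℝ :=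
  sInf (f '' regularGrid n r)

/-- `f̲`, the minimum of `f` over the standard simplex. -/
def minSimplex (n : ℕ) (f : (Fin n → ℝ) → ℝ) : ℝ :=
  sInf (f '' stdSimplex ℝ (Fin n))

/-- `f̄`, the maximum of `f` over the standard simplex. -/
def maxSimplex (n : ℕ) (f : (Fin n → ℝ) → ℝ) : ℝ :=
  sSup (f '' stdSimplex ℝ (Fin n))

/-- The cubic polynomial
`f = Σ_i f_i x_i³ + Σ_{i<j}(f_{ij} x_i x_j² + g_{ij} x_i² x_j) + Σ_{i<j<k} f_{ijk} x_i x_j x_k`. -/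
def cubicPoly (n : ℕ) (f1 : Fin n → ℝ) (f2 g2 : Fin n → Fin n → ℝ)
    (f3 : Fin n → Fin n → Fin n → ℝ) (x : Fin n → ℝ) : ℝ :=
  ∑ i, f1 i * x i ^ 3 +
    ∑ p ∈ Finset.univ.filter (fun p : Fin n × Fin n => p.1 < p.2),
      (f2 p.1 p.2 * x p.1 * x p.2 ^ 2 + g2 p.1 p.2 * x p.1 ^ 2 * x p.2) +
    ∑ t ∈ Finset.univ.filter (fun t : Fin n × Fin n × Fin n => t.1 < t.2.1 ∧ t.2.1 < t.2.2),
      f3 t.1 t.2.1 t.2.2 * x t.1 * x t.2.1 * x t.2.2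

/-- The Pólya-type lower bound `f_min^{(r-3)} = min_{α ∈ I(n,r)} Σ_β f_β α^{(β)} / r^{(3)}`
spelled out for the cubic polynomial `cubicPoly`. -/
def cubicPolya (n r : ℕ) (f1 : Fin n → ℝ) (f2 g2 : Fin n → Fin n → ℝ)
    (f3 : Fin n → Fin n → Fin n → ℝ) : ℝ :=
  sInf ((fun α : Fin n → ℕ =>
      (∑ i, f1 i * fall ((α i : ℕ) : ℝ) 3 +
        ∑ p ∈ Finset.univ.filter (fun p : Fin n × Fin n => p.1 < p.2),
          (f2 p.1 p.2 * (α p.1 : ℝ) * fall ((α p.2 : ℕ) : ℝ) 2 +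
            g2 p.1 p.2 * fall ((α p.1 : ℕ) : ℝ) 2 * (α p.2 : ℝ)) +
        ∑ t ∈ Finset.univ.filter (fun t : Fin n × Fin n × Fin n => t.1 < t.2.1 ∧ t.2.1 < t.2.2),
          f3 t.1 t.2.1 t.2.2 * (α t.1 : ℝ) * (α t.2.1 : ℝ) * (α t.2.2 : ℝ)) /
      fall (r : ℝ) 3) ''
    {α : Fin n → ℕ | ∑ i, α i = r})

/-- for a cubic `f` and `r ≥ 3`,
`((r−1)(r−2)/r²) f_min^{(r−3)} ≥ f_{Δ(n,r)} − (1/r) max_{x ∈ Δ_n}[3Σ f_i x_i² + Σ_{i<j}(f_{ij}+g_{ij})x_i x_j] + (2/r²) min_{x ∈ Δ_n} Σ f_i x_i`. -/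
theorem statement6 (n r : ℕ) (hn : 0 < n) (hr : 3 ≤ r) (f1 : Fin n → ℝ)
    (f2 g2 : Fin n → Fin n → ℝ) (f3 : Fin n → Fin n → Fin n → ℝ) :
    (((r : ℝ) - 1) * ((r : ℝ) - 2) / (r : ℝ) ^ 2) * cubicPolya n r f1 f2 g2 f3 ≥
      minGrid n r (cubicPoly n f1 f2 g2 f3) -
        (1 / (r : ℝ)) * maxSimplex n (fun x =>
          3 * ∑ i, f1 i * x i ^ 2 +
            ∑ p ∈ Finset.univ.filter (fun p : Fin n × Fin n => p.1 < p.2),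
              (f2 p.1 p.2 + g2 p.1 p.2) * x p.1 * x p.2) +
        (2 / (r : ℝ) ^ 2) * minSimplex n (fun x => ∑ i, f1 i * x i) := by
  classical
  have hrR : (3:ℝ) ≤ (r:ℝ) := by exact_mod_cast hr
  have hr0 : (0:ℝ) < r := by linarith
  have hrne : (r:ℝ) ≠ 0 := ne_of_gt hr0
  have hr1' : (0:ℝ) < (r:ℝ) - 1 := by linarith
  have hr2' : (0:ℝ) < (r:ℝ) - 2 := by linarith
  have hc : (0:ℝ) < ((r:ℝ) - 1) * ((r:ℝ) - 2) / (r:ℝ) ^ 2 :=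
    div_pos (mul_pos hr1' hr2') (by positivity)
  -- continuity and compactness facts
  have hQc : Continuous (fun x : Fin n → ℝ =>
      3 * ∑ i, f1 i * x i ^ 2 +
        ∑ p ∈ Finset.univ.filter (fun p : Fin n × Fin n => p.1 < p.2),
          (f2 p.1 p.2 + g2 p.1 p.2) * x p.1 * x p.2) := by fun_prop
  have hLc : Continuous (fun x : Fin n → ℝ => ∑ i, f1 i * x i) := by fun_prop
  have hQb : BddAbove ((fun x : Fin n → ℝ =>
      3 * ∑ i, f1 i * x i ^ 2 +
        ∑ p ∈ Finset.univ.filter (fun p : Fin n × Fin n => p.1 < p.2),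
          (f2 p.1 p.2 + g2 p.1 p.2) * x p.1 * x p.2) '' stdSimplex ℝ (Fin n)) :=
    ((isCompact_stdSimplex ℝ (Fin n)).image hQc).bddAbove
  have hLb : BddBelow ((fun x : Fin n → ℝ => ∑ i, f1 i * x i) '' stdSimplex ℝ (Fin n)) :=
    ((isCompact_stdSimplex ℝ (Fin n)).image hLc).bddBelow
  -- the regular grid is finite
  have hgridfin : (regularGrid n r).Finite := by
    have hsub : regularGrid n r ⊆
        Set.range (fun k : Fin n → Fin (r+1) => fun i => ((k i : ℕ) : ℝ) / r) := by
      rintro x ⟨hx, hk⟩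
      choose k hk using hk
      have hxk : ∀ i, x i = (k i : ℝ) / r := by
        intro i
        rw [eq_div_iff hrne, ← hk i]; ring
      have hkr : ∀ i, k i < r + 1 := by
        intro i
        have h1 : x i ≤ 1 := by
          calc x i ≤ ∑ j, x j := Finset.single_le_sum (fun j _ => hx.1 j) (mem_univ i)
            _ = 1 := hx.2
        have h2 : (k i : ℝ) ≤ r := by
          rw [← hk i]; nlinarith [hx.1 i]
        have h3 : k i ≤ r := by exact_mod_cast h2
        omega
      exact ⟨fun i => ⟨k i, hkr i⟩, by funext i; simp [hxk i]⟩
    exact (Set.finite_range _).subset hsub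
  have hGb : BddBelow ((cubicPoly n f1 f2 g2 f3) '' regularGrid n r) :=
    (hgridfin.image _).bddBelow
  rw [ge_iff_le, ← div_le_iff₀' hc]
  unfold cubicPolya
  apply le_csInf
  · refine ⟨_, ⟨fun i => if i = ⟨0, hn⟩ then r else 0, ?_, rfl⟩⟩
    simp
  · rintro b ⟨α, hα, rfl⟩
    rw [div_le_iff₀' hc]
    have hα' : ∑ i, α i = r := hα
    set x : Fin n → ℝ := fun i => (α i : ℝ) / r with hxdef
    have hxsimp : x ∈ stdSimplex ℝ (Fin n) := by
      constructor
      · intro i; positivity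
      · rw [← Finset.sum_div]
        rw [show (∑ i, ((α i : ℕ) : ℝ)) = ((∑ i, α i : ℕ) : ℝ) by push_cast; rfl, hα']
        exact div_self hrne
    have hxgrid : x ∈ regularGrid n r := by
      refine ⟨hxsimp, fun i => ⟨α i, ?_⟩⟩
      simp only [hxdef]
      field_simp
    have hF : minGrid n r (cubicPoly n f1 f2 g2 f3) ≤ cubicPoly n f1 f2 g2 f3 x :=
      csInf_le hGb ⟨x, hxgrid, rfl⟩
    have hQ : (3 * ∑ i, f1 i * x i ^ 2 +
        ∑ p ∈ Finset.univ.filter (fun p : Fin n × Fin n => p.1 < p.2),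
          (f2 p.1 p.2 + g2 p.1 p.2) * x p.1 * x p.2) ≤
        maxSimplex n (fun x =>
          3 * ∑ i, f1 i * x i ^ 2 +
            ∑ p ∈ Finset.univ.filter (fun p : Fin n × Fin n => p.1 < p.2),
              (f2 p.1 p.2 + g2 p.1 p.2) * x p.1 * x p.2) :=
      le_csSup hQb ⟨x, hxsimp, rfl⟩
    have hL : minSimplex n (fun x => ∑ i, f1 i * x i) ≤ ∑ i, f1 i * x i :=
      csInf_le hLb ⟨x, hxsimp, rfl⟩
    -- three sum identities
    have h1 : ∑ i, f1 i * fall ((α i : ℕ) : ℝ) 3 =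
        (r:ℝ)^3 * ∑ i, f1 i * x i ^ 3 - (r:ℝ)^2 * (3 * ∑ i, f1 i * x i ^ 2) +
          2 * (r:ℝ) * ∑ i, f1 i * x i := by
      simp only [Finset.mul_sum, ← Finset.sum_sub_distrib, ← Finset.sum_add_distrib]
      refine Finset.sum_congr rfl fun i _ => ?_
      simp only [fall, hxdef]
      field_simp
      ring
    have h2 : ∑ p ∈ Finset.univ.filter (fun p : Fin n × Fin n => p.1 < p.2),
          (f2 p.1 p.2 * (α p.1 : ℝ) * fall ((α p.2 : ℕ) : ℝ) 2 +
            g2 p.1 p.2 * fall ((α p.1 : ℕ) : ℝ) 2 * (α p.2 : ℝ)) =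
        (r:ℝ)^3 * ∑ p ∈ Finset.univ.filter (fun p : Fin n × Fin n => p.1 < p.2),
            (f2 p.1 p.2 * x p.1 * x p.2 ^ 2 + g2 p.1 p.2 * x p.1 ^ 2 * x p.2) -
          (r:ℝ)^2 * ∑ p ∈ Finset.univ.filter (fun p : Fin n × Fin n => p.1 < p.2),
            (f2 p.1 p.2 + g2 p.1 p.2) * x p.1 * x p.2 := by
      simp only [Finset.mul_sum, ← Finset.sum_sub_distrib]
      refine Finset.sum_congr rfl fun p _ => ?_
      simp only [fall, hxdef]
      field_simp
      ring
    have h3 : ∑ t ∈ Finset.univ.filter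
          (fun t : Fin n × Fin n × Fin n => t.1 < t.2.1 ∧ t.2.1 < t.2.2),
          f3 t.1 t.2.1 t.2.2 * (α t.1 : ℝ) * (α t.2.1 : ℝ) * (α t.2.2 : ℝ) =
        (r:ℝ)^3 * ∑ t ∈ Finset.univ.filter
          (fun t : Fin n × Fin n × Fin n => t.1 < t.2.1 ∧ t.2.1 < t.2.2),
          f3 t.1 t.2.1 t.2.2 * x t.1 * x t.2.1 * x t.2.2 := by
      simp only [Finset.mul_sum]
      refine Finset.sum_congr rfl fun t _ => ?_
      simp only [hxdef]
      field_simp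
    have hfall3 : fall (r:ℝ) 3 = (r:ℝ) * ((r:ℝ) - 1) * ((r:ℝ) - 2) := by
      simp only [fall]; push_cast; ring
    have hkey : ((r:ℝ) - 1) * ((r:ℝ) - 2) / (r:ℝ) ^ 2 *
        ((∑ i, f1 i * fall ((α i : ℕ) : ℝ) 3 +
          ∑ p ∈ Finset.univ.filter (fun p : Fin n × Fin n => p.1 < p.2),
            (f2 p.1 p.2 * (α p.1 : ℝ) * fall ((α p.2 : ℕ) : ℝ) 2 +
              g2 p.1 p.2 * fall ((α p.1 : ℕ) : ℝ) 2 * (α p.2 : ℝ)) +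
          ∑ t ∈ Finset.univ.filter
            (fun t : Fin n × Fin n × Fin n => t.1 < t.2.1 ∧ t.2.1 < t.2.2),
            f3 t.1 t.2.1 t.2.2 * (α t.1 : ℝ) * (α t.2.1 : ℝ) * (α t.2.2 : ℝ)) /
          fall (r:ℝ) 3) =
        cubicPoly n f1 f2 g2 f3 x -
          (1 / (r:ℝ)) * (3 * ∑ i, f1 i * x i ^ 2 +
            ∑ p ∈ Finset.univ.filter (fun p : Fin n × Fin n => p.1 < p.2),
              (f2 p.1 p.2 + g2 p.1 p.2) * x p.1 * x p.2) +
          (2 / (r:ℝ) ^ 2) * ∑ i, f1 i * x i := by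
      rw [hfall3, h1, h2, h3]
      simp only [cubicPoly]
      field_simp
      ring
    rw [hkey]
    have hq1 : (1 / (r:ℝ)) * (3 * ∑ i, f1 i * x i ^ 2 +
        ∑ p ∈ Finset.univ.filter (fun p : Fin n × Fin n => p.1 < p.2),
          (f2 p.1 p.2 + g2 p.1 p.2) * x p.1 * x p.2) ≤
        (1 / (r:ℝ)) * maxSimplex n (fun x =>
          3 * ∑ i, f1 i * x i ^ 2 +
            ∑ p ∈ Finset.univ.filter (fun p : Fin n × Fin n => p.1 < p.2),
              (f2 p.1 p.2 + g2 p.1 p.2) * x p.1 * x p.2) :=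
      mul_le_mul_of_nonneg_left hQ (by positivity)
    have hq2 : (2 / (r:ℝ) ^ 2) * minSimplex n (fun x => ∑ i, f1 i * x i) ≤
        (2 / (r:ℝ) ^ 2) * ∑ i, f1 i * x i :=
      mul_le_mul_of_nonneg_left hL (by positivity)
    linarith
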